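/- Let V be a finite-dimensional complex vector space and let f be a linear endomorphism of V that is not nilpotent. Then the set {λ ∈ ℂ : λ • f is similar to f} is finite. -/

import Mathlib

open Polynomial in
lemma exists_ne_zero_mem_spectrum {V : Type*} [AddCommGroup V] [Module ℂ V]
    [FiniteDimensional ℂ V] (f : Module.End ℂ V) (hf : ¬ IsNilpotent f) :
    ∃ μ ∈ spectrum ℂ f, μ ≠ 0 := by
  by_contra h
  push_neg at h
  apply hf
  set p := minpoly ℂ f with hp
  have hint : IsIntegral ℂ f := Algebra.IsIntegral.isIntegral f
  have hmon : p.Monic := minpoly.monic hint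
  have hsplit : p.Splits := IsAlgClosed.splits p
  have hroots : ∀ a ∈ p.roots, a = 0 := by
    intro a ha
    have : f.HasEigenvalue a := by
      rw [Module.End.hasEigenvalue_iff_isRoot]
      exact isRoot_of_mem_roots ha
    exact h a this.mem_spectrum
  have hpe : p = X ^ p.roots.card := by
    have heq := hsplit.eq_prod_roots_of_monic hmon
    conv_lhs => rw [heq]
    calc (p.roots.map fun a => X - C a).prod
        = (p.roots.map fun _ => X).prod := by
          congr 1
          apply Multiset.map_congr rfl
          intro a ha
          rw [hroots a ha, map_zero, sub_zero]
      _ = X ^ p.roots.card := by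
          rw [Multiset.map_const', Multiset.prod_replicate]
  refine ⟨p.roots.card, ?_⟩
  have := minpoly.aeval ℂ f
  rw [← hp, hpe] at this
  simpa using this

theorem stmt_3 {V : Type*} [AddCommGroup V] [Module ℂ V] [FiniteDimensional ℂ V]
    (f : V →ₗ[ℂ] V) (hf : ¬ IsNilpotent f) :
    {l : ℂ | ∃ u : V ≃ₗ[ℂ] V, l • f = u.toLinearMap ∘ₗ f ∘ₗ u.symm.toLinearMap}.Finite := by
  obtain ⟨μ, hμs, hμ0⟩ := exists_ne_zero_mem_spectrum f hf
  set S := {l : ℂ | ∃ u : V ≃ₗ[ℂ] V, l • f = u.toLinearMap ∘ₗ f ∘ₗ u.symm.toLinearMap} with hS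
  have hne : ∀ l ∈ S, l ≠ 0 := by
    rintro l ⟨u, hu⟩ rfl
    apply hf
    have : f = 0 := by
      have h0 : u.symm.toLinearMap ∘ₗ ((0 : ℂ) • f) ∘ₗ u.toLinearMap
          = u.symm.toLinearMap ∘ₗ (u.toLinearMap ∘ₗ f ∘ₗ u.symm.toLinearMap) ∘ₗ u.toLinearMap := by
        rw [hu]
      simp only [zero_smul] at h0 ⊢
      ext v
      have := LinearMap.congr_fun h0 v
      simpa using this.symm
    rw [this]
    exact ⟨1, by simp⟩
  have hmem : ∀ l ∈ S, l⁻¹ * μ ∈ spectrum ℂ f := by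
    rintro l ⟨u, hu⟩
    have hl0 : l ≠ 0 := hne l ⟨u, hu⟩
    -- make u into a unit of End
    let U : (Module.End ℂ V)ˣ :=
      ⟨u.toLinearMap, u.symm.toLinearMap, by ext v; simp, by ext v; simp⟩
    have hconj : spectrum ℂ (l • f) = spectrum ℂ f := by
      have : l • f = (U : Module.End ℂ V) * f * (U⁻¹ : (Module.End ℂ V)ˣ) := hu
      rw [this, spectrum.units_conjugate]
    have h' : (Units.mk0 l hl0) • (l⁻¹ * μ) ∈ spectrum ℂ ((Units.mk0 l hl0) • f) := by
      have h1 : (Units.mk0 l hl0) • (l⁻¹ * μ) = μ := by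
        simp [Units.smul_def, mul_inv_cancel_left₀ hl0]
      have h2 : (Units.mk0 l hl0) • f = l • f := rfl
      rw [h1, h2, hconj]
      exact hμs
    exact spectrum.smul_mem_smul_iff.mp h' 
  have hfin : (spectrum ℂ f).Finite := Module.End.finite_spectrum f
  apply Set.Finite.of_finite_image (f := fun l => l⁻¹ * μ)
  · exact hfin.subset (by rintro x ⟨l, hl, rfl⟩; exact hmem l hl)
  · intro a ha b hb hab
    have ha0 : a ≠ 0 := hne a ha
    have hb0 : b ≠ 0 := hne b hb
    have : a⁻¹ = b⁻¹ := mul_right_cancel₀ hμ0 hab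
    exact inv_injective this
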